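/- Let R be a ring with unit. With B₀, B₁, B₂, ν, d₁, d₂ as defined (with the normalization that any symbol having an entry equal to 0 denotes the zero element), the complex is exact at B₁: the kernel of d₁: B₁ → B₀ equals the image of d₂: B₂ → B₁. -/

import Mathlib

open scoped Classical

/-- `Ṙ = R \ {0}`. -/
abbrev Rdot (R : Type*) [Ring R] := {x : R // x ≠ 0}

/-- `B₀ = ℤ(Ṙ)`. -/
abbrev B0 (R : Type*) [Ring R] := FreeAbelianGroup (Rdot R)

/-- `B₁ = ℤ(Ṙ×Ṙ)`. -/
abbrev B1 (R : Type*) [Ring R] := FreeAbelianGroup (Rdot R × Rdot R)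

/-- `B₂ = ℤ(Ṙ×Ṙ×Ṙ) ⊕ ℤ(Ṙ×Ṙ)`. -/
abbrev B2 (R : Type*) [Ring R] :=
  FreeAbelianGroup (Rdot R × Rdot R × Rdot R) × FreeAbelianGroup (Rdot R × Rdot R)

/-- `B₃ = ℤ(Ṙ×Ṙ×Ṙ×Ṙ) ⊕ ℤ(Ṙ×Ṙ×Ṙ) ⊕ ℤ(Ṙ×Ṙ) ⊕ ℤ(Ṙ)`. -/
abbrev B3 (R : Type*) [Ring R] :=
  FreeAbelianGroup (Rdot R × Rdot R × Rdot R × Rdot R) ×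
    (FreeAbelianGroup (Rdot R × Rdot R × Rdot R) ×
      (FreeAbelianGroup (Rdot R × Rdot R) × FreeAbelianGroup (Rdot R)))

variable (R : Type*) [Ring R]

/-- The generator `[x]` of `B₀`, with the normalization `[0] = 0`. -/
noncomputable def br0 (x : R) : B0 R :=
  if h : x = 0 then 0 else FreeAbelianGroup.of ⟨x, h⟩

/-- The generator `[x,y]` of `B₁`, with the normalization that a symbol with an
entry equal to `0` is the zero element. -/
noncomputable def br1 (x y : R) : B1 R :=
  if hx : x = 0 then 0 else if hy : y = 0 then 0
  else FreeAbelianGroup.of (⟨x, hx⟩, ⟨y, hy⟩)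

/-- The generator `[x,y,z]` of `ℤ(Ṙ×Ṙ×Ṙ)`, with the normalization that a symbol
with an entry equal to `0` is the zero element. -/
noncomputable def br2 (x y z : R) : FreeAbelianGroup (Rdot R × Rdot R × Rdot R) :=
  if hx : x = 0 then 0 else if hy : y = 0 then 0 else if hz : z = 0 then 0
  else FreeAbelianGroup.of (⟨x, hx⟩, ⟨y, hy⟩, ⟨z, hz⟩)

/-- `ν : B₀ → R`, `ν[x] = x`. -/
noncomputable def nuB : B0 R →+ R :=
  FreeAbelianGroup.lift fun x : Rdot R => (x : R)

/-- `d₁ : B₁ → B₀`, `d₁[x,y] = [y] − [x+y] + [x]`. -/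
noncomputable def d1 : B1 R →+ B0 R :=
  FreeAbelianGroup.lift fun p : Rdot R × Rdot R =>
    br0 R (p.2 : R) - br0 R ((p.1 : R) + (p.2 : R)) + br0 R (p.1 : R)

/-- `d₂ : B₂ → B₁`; on the first summand
`d₂[x,y,z] = [y,z] − [x+y,z] + [x,y+z] − [x,y]`, and on the second summand
`d₂[x,y] = [x,y] − [y,x]`. -/
noncomputable def d2 : B2 R →+ B1 R :=
  AddMonoidHom.coprod
    (FreeAbelianGroup.lift fun p : Rdot R × Rdot R × Rdot R =>
      br1 R (p.2.1 : R) (p.2.2 : R) - br1 R ((p.1 : R) + (p.2.1 : R)) (p.2.2 : R) +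
        br1 R (p.1 : R) ((p.2.1 : R) + (p.2.2 : R)) - br1 R (p.1 : R) (p.2.1 : R))
    (FreeAbelianGroup.lift fun p : Rdot R × Rdot R =>
      br1 R (p.1 : R) (p.2 : R) - br1 R (p.2 : R) (p.1 : R))

/-- `d₃ : B₃ → B₂`; on the four summands
`d₃[x,y,z,t] = [y,z,t] − [x+y,z,t] + [x,y+z,t] − [x,y,z+t] + [x,y,z]`,
`d₃[x,y,z] = [x,y,z] − [x,z,y] + [z,x,y] + [x+y,z] − [x,z] − [y,z]`,
`d₃[x,y] = [x,y] + [y,x]`, and `d₃[x] = [x,x]`. -/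
noncomputable def d3 : B3 R →+ B2 R :=
  AddMonoidHom.coprod
    (FreeAbelianGroup.lift fun p : Rdot R × Rdot R × Rdot R × Rdot R =>
      (br2 R (p.2.1 : R) (p.2.2.1 : R) (p.2.2.2 : R) -
          br2 R ((p.1 : R) + (p.2.1 : R)) (p.2.2.1 : R) (p.2.2.2 : R) +
          br2 R (p.1 : R) ((p.2.1 : R) + (p.2.2.1 : R)) (p.2.2.2 : R) -
          br2 R (p.1 : R) (p.2.1 : R) ((p.2.2.1 : R) + (p.2.2.2 : R)) +
          br2 R (p.1 : R) (p.2.1 : R) (p.2.2.1 : R), 0))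
    (AddMonoidHom.coprod
      (FreeAbelianGroup.lift fun p : Rdot R × Rdot R × Rdot R =>
        (br2 R (p.1 : R) (p.2.1 : R) (p.2.2 : R) -
            br2 R (p.1 : R) (p.2.2 : R) (p.2.1 : R) +
            br2 R (p.2.2 : R) (p.1 : R) (p.2.1 : R),
          br1 R ((p.1 : R) + (p.2.1 : R)) (p.2.2 : R) -
            br1 R (p.1 : R) (p.2.2 : R) - br1 R (p.2.1 : R) (p.2.2 : R)))
      (AddMonoidHom.coprod
        (FreeAbelianGroup.lift fun p : Rdot R × Rdot R =>
          ((0 : FreeAbelianGroup (Rdot R × Rdot R × Rdot R)),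
            br1 R (p.1 : R) (p.2 : R) + br1 R (p.2 : R) (p.1 : R)))
        (FreeAbelianGroup.lift fun x : Rdot R =>
          ((0 : FreeAbelianGroup (Rdot R × Rdot R × Rdot R)),
            br1 R (x : R) (x : R)))))

section Aux

variable {R}

/-- The quotient `B₁ / im d₂`. -/
abbrev Qgrp (R : Type*) [Ring R] := B1 R ⧸ (d2 R).range

/-- The quotient map. -/
noncomputable def piQ (R : Type*) [Ring R] : B1 R →+ Qgrp R :=
  QuotientAddGroup.mk' (d2 R).range

lemma piQ_d2 (w : B2 R) : piQ R (d2 R w) = 0 := by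
  rw [piQ, QuotientAddGroup.mk'_apply, QuotientAddGroup.eq_zero_iff]
  exact ⟨w, rfl⟩

/-- The class of `[x,y]` in the quotient. -/
noncomputable def cc (R : Type*) [Ring R] (x y : R) : Qgrp R := piQ R (br1 R x y)

lemma br1_zero_left (y : R) : br1 R 0 y = 0 := by simp [br1]

lemma br1_zero_right (x : R) : br1 R x 0 = 0 := by simp [br1]

lemma cc_zero_left (y : R) : cc R 0 y = 0 := by simp [cc, br1_zero_left]

lemma cc_zero_right (x : R) : cc R x 0 = 0 := by simp [cc, br1_zero_right]

lemma cc_symm (x y : R) : cc R x y = cc R y x := by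
  by_cases hx : x = 0
  · simp [hx, cc_zero_left, cc_zero_right]
  by_cases hy : y = 0
  · simp [hy, cc_zero_left, cc_zero_right]
  have h : d2 R (0, FreeAbelianGroup.of ((⟨x, hx⟩ : Rdot R), (⟨y, hy⟩ : Rdot R)))
      = br1 R x y - br1 R y x := by
    simp [d2, AddMonoidHom.coprod_apply, FreeAbelianGroup.lift_apply_of]
  have h2 := piQ_d2 (R := R) (0, FreeAbelianGroup.of ((⟨x, hx⟩ : Rdot R), (⟨y, hy⟩ : Rdot R)))
  rw [h, map_sub] at h2
  have := sub_eq_zero.mp h2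
  simpa [cc] using this

lemma cc_cocycle (x y z : R) :
    cc R y z + cc R x (y + z) = cc R (x + y) z + cc R x y := by
  by_cases hx : x = 0
  · simp [hx, cc_zero_left]
  by_cases hy : y = 0
  · simp [hy, cc_zero_left, cc_zero_right]
  by_cases hz : z = 0
  · simp [hz, cc_zero_left, cc_zero_right]
  have h : d2 R (FreeAbelianGroup.of ((⟨x, hx⟩ : Rdot R), (⟨y, hy⟩ : Rdot R),
        (⟨z, hz⟩ : Rdot R)), 0)
      = br1 R y z - br1 R (x + y) z + br1 R x (y + z) - br1 R x y := by
    simp [d2, AddMonoidHom.coprod_apply, FreeAbelianGroup.lift_apply_of]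
  have h2 := piQ_d2 (R := R) (FreeAbelianGroup.of ((⟨x, hx⟩ : Rdot R), (⟨y, hy⟩ : Rdot R),
        (⟨z, hz⟩ : Rdot R)), 0)
  rw [h, map_sub, map_add, map_sub] at h2
  have h3 : cc R y z - cc R (x + y) z + cc R x (y + z) - cc R x y = 0 := h2
  have h4 : cc R y z + cc R x (y + z) - (cc R (x + y) z + cc R x y)
      = cc R y z - cc R (x + y) z + cc R x (y + z) - cc R x y := by abel
  rw [h3] at h4
  exact sub_eq_zero.mp h4

/-- The abelian extension of `R` by `Qgrp R` determined by the cocycle `cc`. -/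
structure ExtE (R : Type*) [Ring R] where
  q : Qgrp R
  r : R

noncomputable instance : Add (ExtE R) :=
  ⟨fun a b => ⟨a.q + b.q + cc R a.r b.r, a.r + b.r⟩⟩

noncomputable instance : Zero (ExtE R) := ⟨⟨0, 0⟩⟩

noncomputable instance : Neg (ExtE R) :=
  ⟨fun a => ⟨-a.q - cc R a.r (-a.r), -a.r⟩⟩

noncomputable instance : AddCommGroup (ExtE R) where
  add := (· + ·)
  zero := 0
  neg := (- ·)
  nsmul := nsmulRec
  zsmul := zsmulRec
  add_assoc a b c := by
    rcases a with ⟨a1, a2⟩; rcases b with ⟨b1, b2⟩; rcases c with ⟨c1, c2⟩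
    show ExtE.mk (a1 + b1 + cc R a2 b2 + c1 + cc R (a2 + b2) c2) (a2 + b2 + c2)
        = ExtE.mk (a1 + (b1 + c1 + cc R b2 c2) + cc R a2 (b2 + c2)) (a2 + (b2 + c2))
    have h := cc_cocycle (R := R) a2 b2 c2
    simp only [ExtE.mk.injEq]
    constructor
    · calc a1 + b1 + cc R a2 b2 + c1 + cc R (a2 + b2) c2
          = (a1 + b1 + c1) + (cc R (a2 + b2) c2 + cc R a2 b2) := by abel
        _ = (a1 + b1 + c1) + (cc R b2 c2 + cc R a2 (b2 + c2)) := by rw [h]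
        _ = a1 + (b1 + c1 + cc R b2 c2) + cc R a2 (b2 + c2) := by abel
    · exact add_assoc a2 b2 c2
  zero_add a := by
    rcases a with ⟨a1, a2⟩
    show ExtE.mk (0 + a1 + cc R 0 a2) (0 + a2) = ExtE.mk a1 a2
    simp [cc_zero_left]
  add_zero a := by
    rcases a with ⟨a1, a2⟩
    show ExtE.mk (a1 + 0 + cc R a2 0) (a2 + 0) = ExtE.mk a1 a2
    simp [cc_zero_right]
  neg_add_cancel a := by
    rcases a with ⟨a1, a2⟩
    show ExtE.mk (-a1 - cc R a2 (-a2) + a1 + cc R (-a2) a2) (-a2 + a2) = ExtE.mk 0 0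
    rw [cc_symm (-a2) a2]
    simp only [ExtE.mk.injEq]
    constructor
    · abel
    · exact neg_add_cancel a2
  add_comm a b := by
    rcases a with ⟨a1, a2⟩; rcases b with ⟨b1, b2⟩
    show ExtE.mk (a1 + b1 + cc R a2 b2) (a2 + b2) = ExtE.mk (b1 + a1 + cc R b2 a2) (b2 + a2)
    rw [cc_symm a2 b2]
    simp only [ExtE.mk.injEq]
    exact ⟨by abel, add_comm a2 b2⟩

lemma ExtE.add_def (a b : ExtE R) :
    a + b = ⟨a.q + b.q + cc R a.r b.r, a.r + b.r⟩ := rfl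

lemma ExtE.neg_def (a : ExtE R) :
    -a = ⟨-a.q - cc R a.r (-a.r), -a.r⟩ := rfl

lemma ExtE.zero_def : (0 : ExtE R) = ⟨0, 0⟩ := rfl

/-- The inclusion `Qgrp R →+ ExtE R`. -/
noncomputable def iotaE (R : Type*) [Ring R] : Qgrp R →+ ExtE R where
  toFun q := ⟨q, 0⟩
  map_zero' := rfl
  map_add' a b := by
    rw [ExtE.add_def]
    simp [cc_zero_left]

/-- The section-extended map `B₀ →+ ExtE R`. -/
noncomputable def fE (R : Type*) [Ring R] : B0 R →+ ExtE R :=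
  FreeAbelianGroup.lift fun x : Rdot R => (⟨0, (x : R)⟩ : ExtE R)

lemma fE_br0 (x : R) : fE R (br0 R x) = ⟨0, x⟩ := by
  by_cases h : x = 0
  · subst h
    rw [show br0 R (0 : R) = 0 from dif_pos rfl, map_zero, ExtE.zero_def]
  · rw [show br0 R x = FreeAbelianGroup.of ⟨x, h⟩ from dif_neg h]
    exact FreeAbelianGroup.lift_apply_of _ _

lemma sE_calc (x y : R) :
    (⟨0, y⟩ : ExtE R) - ⟨0, x + y⟩ + ⟨0, x⟩ = ⟨cc R x y, 0⟩ := by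
  have h1 : (⟨0, x⟩ : ExtE R) + ⟨0, y⟩ = ⟨cc R x y, x + y⟩ := by
    rw [ExtE.add_def]; simp
  have h2 : (⟨cc R x y, x + y⟩ : ExtE R) - ⟨0, x + y⟩ = ⟨cc R x y, 0⟩ := by
    rw [sub_eq_add_neg, ExtE.neg_def, ExtE.add_def]
    simp only [ExtE.mk.injEq]
    constructor
    · simp
    · abel
  calc (⟨0, y⟩ : ExtE R) - ⟨0, x + y⟩ + ⟨0, x⟩
      = (⟨0, x⟩ : ExtE R) + ⟨0, y⟩ - ⟨0, x + y⟩ := by abel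
    _ = (⟨cc R x y, x + y⟩ : ExtE R) - ⟨0, x + y⟩ := by rw [h1]
    _ = ⟨cc R x y, 0⟩ := h2

lemma key_comp : (fE R).comp (d1 R) = (iotaE R).comp (piQ R) := by
  ext p
  rcases p with ⟨⟨x, hx⟩, ⟨y, hy⟩⟩
  have hd1 : d1 R (FreeAbelianGroup.of ((⟨x, hx⟩ : Rdot R), (⟨y, hy⟩ : Rdot R)))
      = br0 R y - br0 R (x + y) + br0 R x := FreeAbelianGroup.lift_apply_of _ _
  have hbr1 : br1 R x y = FreeAbelianGroup.of ((⟨x, hx⟩ : Rdot R), (⟨y, hy⟩ : Rdot R)) := by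
    simp [br1, hx, hy]
  simp only [AddMonoidHom.comp_apply, hd1, map_sub, map_add, fE_br0]
  rw [sE_calc]
  show _ = iotaE R (piQ R (FreeAbelianGroup.of ((⟨x, hx⟩ : Rdot R), (⟨y, hy⟩ : Rdot R))))
  rw [← hbr1]
  rfl

lemma d1_br1 (x y : R) :
    d1 R (br1 R x y) = br0 R y - br0 R (x + y) + br0 R x := by
  by_cases hx : x = 0
  · subst hx
    rw [br1_zero_left, map_zero, zero_add, show br0 R (0 : R) = 0 from dif_pos rfl]
    abel
  by_cases hy : y = 0
  · subst hy
    rw [br1_zero_right, map_zero, add_zero, show br0 R (0 : R) = 0 from dif_pos rfl]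
    abel
  · rw [show br1 R x y = FreeAbelianGroup.of ((⟨x, hx⟩ : Rdot R), (⟨y, hy⟩ : Rdot R)) by
      simp [br1, hx, hy]]
    exact FreeAbelianGroup.lift_apply_of _ _

lemma d1_d2_inl :
    (d1 R).comp ((d2 R).comp (AddMonoidHom.inl (FreeAbelianGroup (Rdot R × Rdot R × Rdot R))
      (FreeAbelianGroup (Rdot R × Rdot R)))) = 0 := by
  ext p
  rcases p with ⟨⟨x, hx⟩, ⟨y, hy⟩, ⟨z, hz⟩⟩
  simp only [AddMonoidHom.comp_apply, AddMonoidHom.inl_apply, AddMonoidHom.zero_apply]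
  rw [show d2 R ((FreeAbelianGroup.of ((⟨x, hx⟩ : Rdot R), (⟨y, hy⟩ : Rdot R),
        (⟨z, hz⟩ : Rdot R)), 0) : B2 R)
      = br1 R y z - br1 R (x + y) z + br1 R x (y + z) - br1 R x y from by
    simp [d2, AddMonoidHom.coprod_apply, FreeAbelianGroup.lift_apply_of]]
  rw [map_sub, map_add, map_sub, d1_br1, d1_br1, d1_br1, d1_br1, add_assoc]
  abel

lemma d1_d2_inr :
    (d1 R).comp ((d2 R).comp (AddMonoidHom.inr (FreeAbelianGroup (Rdot R × Rdot R × Rdot R))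
      (FreeAbelianGroup (Rdot R × Rdot R)))) = 0 := by
  ext p
  rcases p with ⟨⟨x, hx⟩, ⟨y, hy⟩⟩
  simp only [AddMonoidHom.comp_apply, AddMonoidHom.inr_apply, AddMonoidHom.zero_apply]
  rw [show d2 R (((0 : FreeAbelianGroup (Rdot R × Rdot R × Rdot R)),
        FreeAbelianGroup.of ((⟨x, hx⟩ : Rdot R), (⟨y, hy⟩ : Rdot R))) : B2 R)
      = br1 R x y - br1 R y x from by
    simp [d2, AddMonoidHom.coprod_apply, FreeAbelianGroup.lift_apply_of]]
  rw [map_sub, d1_br1, d1_br1, add_comm y x]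
  abel

lemma d1_d2_eq_zero (w : B2 R) : d1 R (d2 R w) = 0 := by
  obtain ⟨w1, w2⟩ := w
  have hw : ((w1, w2) : B2 R) = (w1, 0) + (0, w2) := by
    simp [Prod.ext_iff]
  rw [hw, map_add, map_add]
  have h1 := DFunLike.congr_fun (d1_d2_inl (R := R)) w1
  have h2 := DFunLike.congr_fun (d1_d2_inr (R := R)) w2
  simp only [AddMonoidHom.comp_apply, AddMonoidHom.inl_apply, AddMonoidHom.inr_apply,
    AddMonoidHom.zero_apply] at h1 h2
  rw [h1, h2, add_zero]

end Aux

/-- The complex is exact at `B₁`: the kernel of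
`d₁ : B₁ → B₀` equals the image of `d₂ : B₂ → B₁`. -/
theorem complex_exact_at_B1 (R : Type*) [Ring R] :
    (d1 R).ker = (d2 R).range := by
  ext b
  simp only [AddMonoidHom.mem_ker, AddMonoidHom.mem_range]
  constructor
  · intro hb
    have hk := DFunLike.congr_fun (key_comp (R := R)) b
    simp only [AddMonoidHom.comp_apply] at hk
    rw [hb, map_zero] at hk
    have hq : piQ R b = 0 := by
      have : iotaE R (piQ R b) = iotaE R 0 := by rw [map_zero]; exact hk.symm
      have h2 : (⟨piQ R b, 0⟩ : ExtE R) = ⟨0, 0⟩ := this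
      exact congrArg ExtE.q h2
    rw [piQ, QuotientAddGroup.mk'_apply, QuotientAddGroup.eq_zero_iff] at hq
    exact hq
  · rintro ⟨w, rfl⟩
    exact d1_d2_eq_zero w
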